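/- For every v, x, w ∈ ℝ^d and y ∈ {−1, +1}, the logistic loss satisfies f_LL(w,(x,y)) ≤ f_LL(v,(x,y)) + ⟨∇f_LL(v,(x,y)), w − v⟩ + (1/2)⟨H_qu(v,(x,y))(w − v), w − v⟩, where H_qu(v,(x,y)) = (tanh(⟨x,v⟩/2)/(2⟨x,v⟩)) · xxᵀ when ⟨x,v⟩ ≠ 0 and H_qu(v,(x,y)) = (1/4) xxᵀ when ⟨x,v⟩ = 0. -/

import Mathlib

open Real

lemma myContinuous_tanh : Continuous Real.tanh := by
  have : Real.tanh = fun x => Real.sinh x / Real.cosh x := by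
    funext x; exact Real.tanh_eq_sinh_div_cosh x
  rw [this]
  exact Real.continuous_sinh.div Real.continuous_cosh fun x => (Real.cosh_pos x).ne'

lemma myHasDerivAt_tanh (t : ℝ) : HasDerivAt Real.tanh (1 / Real.cosh t ^ 2) t := by
  have h := (Real.hasDerivAt_sinh t).div (Real.hasDerivAt_cosh t) (Real.cosh_pos t).ne'
  have h2 : (Real.cosh t * Real.cosh t - Real.sinh t * Real.sinh t) / Real.cosh t ^ 2
      = 1 / Real.cosh t ^ 2 := by
    rw [show Real.cosh t * Real.cosh t - Real.sinh t * Real.sinh t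
        = Real.cosh t ^ 2 - Real.sinh t ^ 2 by ring, Real.cosh_sq_sub_sinh_sq]
  rw [← h2]
  have : Real.tanh = fun x => Real.sinh x / Real.cosh x := by
    funext x; exact Real.tanh_eq_sinh_div_cosh x
  rw [this]
  exact h

lemma sinh_le_mul_cosh {t : ℝ} (ht : 0 ≤ t) : Real.sinh t ≤ t * Real.cosh t := by
  have mono : MonotoneOn (fun s : ℝ => s * Real.cosh s - Real.sinh s) (Set.Ici 0) := by
    apply monotoneOn_of_deriv_nonneg (convex_Ici 0)
    · fun_prop
    · fun_prop
    · intro s hs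
      rw [interior_Ici, Set.mem_Ioi] at hs
      have h : HasDerivAt (fun s : ℝ => s * Real.cosh s - Real.sinh s)
          (1 * Real.cosh s + s * Real.sinh s - Real.cosh s) s :=
        ((hasDerivAt_id s).mul (Real.hasDerivAt_cosh s)).sub (Real.hasDerivAt_sinh s)
      rw [h.deriv]
      have hsinh : 0 < Real.sinh s := Real.sinh_pos_iff.2 hs
      nlinarith
  have := mono (Set.mem_Ici.2 le_rfl) (Set.mem_Ici.2 ht) ht
  simp at this
  linarith

lemma tanh_le_self {t : ℝ} (ht : 0 ≤ t) : Real.tanh t ≤ t := by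
  rw [Real.tanh_eq_sinh_div_cosh, div_le_iff₀ (Real.cosh_pos t)]
  exact sinh_le_mul_cosh ht

lemma tanh_ratio {r u : ℝ} (hr : 0 < r) (hru : r ≤ u) :
    Real.tanh u * r ≤ Real.tanh r * u := by
  have hd : ∀ t : ℝ, HasDerivAt (fun t : ℝ => Real.tanh r * t - Real.tanh t * r)
      (Real.tanh r * 1 - 1 / Real.cosh t ^ 2 * r) t := fun t =>
    ((hasDerivAt_id t).const_mul (Real.tanh r)).sub ((myHasDerivAt_tanh t).mul_const r)
  have mono : MonotoneOn (fun t : ℝ => Real.tanh r * t - Real.tanh t * r) (Set.Ici r) := by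
    apply monotoneOn_of_deriv_nonneg (convex_Ici r)
    · exact ((continuous_const.mul continuous_id).sub
        (myContinuous_tanh.mul continuous_const)).continuousOn
    · intro t _
      exact (hd t).differentiableAt.differentiableWithinAt
    · intro t ht
      rw [interior_Ici, Set.mem_Ioi] at ht
      rw [(hd t).deriv]
      have hcr : Real.cosh r ≤ Real.cosh t := by
        refine Real.cosh_le_cosh.2 ?_
        rw [abs_of_pos hr, abs_of_pos (hr.trans ht)]
        exact ht.le
      have h1 : 0 < Real.cosh r := Real.cosh_pos r
      have h2 : 0 < Real.cosh t := Real.cosh_pos t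
      have hs : r < Real.sinh r := Real.self_lt_sinh_iff.2 hr
      have htanh : Real.tanh r * Real.cosh r = Real.sinh r := by
        rw [Real.tanh_eq_sinh_div_cosh]; field_simp
      rw [sub_nonneg, div_mul_eq_mul_div, div_le_iff₀ (by positivity), mul_one]
      have htr : 0 ≤ Real.tanh r := by
        rw [Real.tanh_eq_sinh_div_cosh]; positivity
      have hsp : 0 < Real.sinh r := Real.sinh_pos_iff.2 hr
      have e1 : Real.tanh r * Real.cosh r ^ 2 = Real.sinh r * Real.cosh r := by
        rw [pow_two, ← mul_assoc, htanh]
      have e2 : r ≤ Real.sinh r * Real.cosh r := by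
        nlinarith [Real.one_le_cosh r]
      have e3 : Real.tanh r * Real.cosh r ^ 2 ≤ Real.tanh r * Real.cosh t ^ 2 :=
        mul_le_mul_of_nonneg_left (by nlinarith) htr
      linarith
  have := mono (Set.mem_Ici.2 le_rfl) (Set.mem_Ici.2 hru) hru
  simp at this
  linarith

lemma key_pos {r u : ℝ} (hr : 0 < r) (hu : 0 ≤ u) :
    Real.log (Real.cosh u) ≤ Real.log (Real.cosh r)
      + Real.tanh r / (2 * r) * (u ^ 2 - r ^ 2) := by
  set c := Real.tanh r / (2 * r) with hc
  have hd : ∀ t : ℝ, HasDerivAt (fun t : ℝ => c * t ^ 2 - Real.log (Real.cosh t))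
      (c * (2 * t) - Real.tanh t) t := by
    intro t
    have h1 : HasDerivAt (fun t : ℝ => t ^ 2) (2 * t) t := by
      simpa using hasDerivAt_pow 2 t
    have h2 := (Real.hasDerivAt_cosh t).log (Real.cosh_pos t).ne'
    rw [Real.tanh_eq_sinh_div_cosh]
    exact (h1.const_mul c).sub h2
  have hcont : Continuous fun t : ℝ => c * t ^ 2 - Real.log (Real.cosh t) := by
    apply Continuous.sub (by fun_prop)
    exact Real.continuous_cosh.log fun t => (Real.cosh_pos t).ne'
  have mono : MonotoneOn (fun t : ℝ => c * t ^ 2 - Real.log (Real.cosh t)) (Set.Ici r) := by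
    apply monotoneOn_of_deriv_nonneg (convex_Ici r) hcont.continuousOn
    · intro t _
      exact (hd t).differentiableAt.differentiableWithinAt
    · intro t ht
      rw [interior_Ici, Set.mem_Ioi] at ht
      rw [(hd t).deriv, sub_nonneg, hc]
      have hrat := tanh_ratio hr ht.le
      have heq : Real.tanh r / (2 * r) * (2 * t) = Real.tanh r * t / r := by
        field_simp
      rw [heq, le_div_iff₀ hr]
      linarith
  have anti : AntitoneOn (fun t : ℝ => c * t ^ 2 - Real.log (Real.cosh t)) (Set.Icc 0 r) := by
    apply antitoneOn_of_deriv_nonpos (convex_Icc 0 r) hcont.continuousOn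
    · intro t _
      exact (hd t).differentiableAt.differentiableWithinAt
    · intro t ht
      rw [interior_Icc, Set.mem_Ioo] at ht
      rw [(hd t).deriv, sub_nonpos, hc]
      have hrat := tanh_ratio ht.1 ht.2.le
      have heq : Real.tanh r / (2 * r) * (2 * t) = Real.tanh r * t / r := by
        field_simp
      rw [heq, div_le_iff₀ hr]
      linarith
  rcases le_or_gt r u with h | h
  · have := mono (Set.mem_Ici.2 le_rfl) (Set.mem_Ici.2 h) h
    simp only at this
    linarith
  · have := anti (Set.mem_Icc.2 ⟨hu, h.le⟩) (Set.mem_Icc.2 ⟨hr.le, le_rfl⟩) h.le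
    simp only at this
    linarith

lemma key_zero (u : ℝ) : Real.log (Real.cosh u) ≤ u ^ 2 / 2 := by
  have hd : ∀ t : ℝ, HasDerivAt (fun t : ℝ => t ^ 2 / 2 - Real.log (Real.cosh t))
      (t - Real.tanh t) t := by
    intro t
    have h1 : HasDerivAt (fun t : ℝ => t ^ 2 / 2) t t := by
      have := (hasDerivAt_pow 2 t).div_const 2
      norm_num at this
      exact this
    have h2 := (Real.hasDerivAt_cosh t).log (Real.cosh_pos t).ne'
    rw [Real.tanh_eq_sinh_div_cosh]
    exact h1.sub h2
  have hcont : Continuous fun t : ℝ => t ^ 2 / 2 - Real.log (Real.cosh t) := by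
    apply Continuous.sub (by fun_prop)
    exact Real.continuous_cosh.log fun t => (Real.cosh_pos t).ne'
  have mono : MonotoneOn (fun t : ℝ => t ^ 2 / 2 - Real.log (Real.cosh t)) (Set.Ici 0) := by
    apply monotoneOn_of_deriv_nonneg (convex_Ici 0) hcont.continuousOn
    · intro t _
      exact (hd t).differentiableAt.differentiableWithinAt
    · intro t ht
      rw [interior_Ici, Set.mem_Ioi] at ht
      rw [(hd t).deriv, sub_nonneg]
      exact tanh_le_self ht.le
  have h := mono (Set.mem_Ici.2 le_rfl) (Set.mem_Ici.2 (abs_nonneg u)) (abs_nonneg u)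
  simp only [Real.cosh_zero, Real.log_one] at h
  simp only [Real.cosh_abs, sq_abs] at h
  linarith

lemma key (r u : ℝ) :
    Real.log (Real.cosh u) ≤ Real.log (Real.cosh r)
      + (if r = 0 then (1:ℝ)/2 else Real.tanh r / (2 * r)) * (u ^ 2 - r ^ 2) := by
  by_cases hr0 : r = 0
  · subst hr0
    have h := key_zero u
    norm_num
    linarith
  · rw [if_neg hr0]
    have hr' : 0 < |r| := abs_pos.2 hr0
    have h := key_pos hr' (abs_nonneg u)
    rw [Real.cosh_abs, Real.cosh_abs, sq_abs, sq_abs] at h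
    have habs : Real.tanh |r| / (2 * |r|) = Real.tanh r / (2 * r) := by
      rcases lt_or_ge r 0 with hneg | hpos
      · rw [abs_of_neg hneg, Real.tanh_neg, mul_neg, neg_div_neg_eq]
      · rw [abs_of_nonneg hpos]
    rw [← habs]
    exact h

lemma log_one_add_exp (t : ℝ) :
    Real.log (1 + Real.exp t) = t / 2 + Real.log 2 + Real.log (Real.cosh (t / 2)) := by
  have h1 : Real.exp (t/2) * Real.exp (t/2) = Real.exp t := by
    rw [← Real.exp_add]; ring_nf
  have h2 : Real.exp (t/2) * Real.exp (-(t/2)) = 1 := by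
    rw [← Real.exp_add]; simp
  have hm : 1 + Real.exp t = Real.exp (t / 2) * (2 * Real.cosh (t / 2)) := by
    rw [Real.cosh_eq]
    linear_combination -h1 - h2
  rw [hm, Real.log_mul (Real.exp_ne_zero _) (by positivity), Real.log_exp,
    Real.log_mul two_ne_zero (Real.cosh_pos _).ne']
  ring

lemma tanh_half (a : ℝ) : Real.tanh (a/2) = (Real.exp a - 1) / (Real.exp a + 1) := by
  have h1 : Real.exp (a/2) * Real.exp (a/2) = Real.exp a := by
    rw [← Real.exp_add]; ring_nf
  have hpos : 0 < Real.exp (a/2) := Real.exp_pos _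
  have hpos2 : 0 < Real.exp a + 1 := by positivity
  rw [Real.tanh_eq_sinh_div_cosh, Real.sinh_eq, Real.cosh_eq, Real.exp_neg]
  rw [div_eq_div_iff (by positivity) hpos2.ne']
  field_simp
  linear_combination (Real.exp a + 1) * h1 - (Real.exp a - 1) * h1

lemma grad_eq (y a : ℝ) (hy : y = 1 ∨ y = -1) :
    -y / (1 + Real.exp (y * a)) = -y / 2 + Real.tanh (a / 2) / 2 := by
  have hpos : 0 < Real.exp a + 1 := by positivity
  rcases hy with rfl | rfl
  · rw [one_mul, tanh_half]
    have : (0:ℝ) < 1 + Real.exp a := by positivity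
    field_simp
    ring
  · rw [neg_one_mul, Real.exp_neg, tanh_half]
    have he : 0 < Real.exp a := Real.exp_pos a
    have : (0:ℝ) < 1 + (Real.exp a)⁻¹ := by positivity
    field_simp
    ring

lemma scalar_main (y a b : ℝ) (hy : y = 1 ∨ y = -1) :
    Real.log (1 + Real.exp (-(y * b))) ≤ Real.log (1 + Real.exp (-(y * a)))
      + (-y / (1 + Real.exp (y * a))) * (b - a)
      + (1/2) * ((if a = 0 then (1:ℝ)/4 else Real.tanh (a/2) / (2*a)) * (b - a)^2) := by
  set c := (if a = 0 then (1:ℝ)/4 else Real.tanh (a/2) / (2*a)) with hc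
  have hcosh : ∀ t : ℝ, Real.cosh (-(y*t)/2) = Real.cosh (t/2) := by
    intro t
    rcases hy with rfl | rfl
    · rw [show -(1*t)/2 = -(t/2) by ring, Real.cosh_neg]
    · rw [show -(-1*t)/2 = t/2 by ring]
  have hb := log_one_add_exp (-(y*b))
  have ha := log_one_add_exp (-(y*a))
  rw [hb, ha, hcosh b, hcosh a, grad_eq y a hy]
  have hkey := key (a/2) (b/2)
  set C := (if a/2 = (0:ℝ) then (1:ℝ)/2 else Real.tanh (a/2) / (2*(a/2))) with hC
  have hCc : C = 2 * c := by
    by_cases h : a = 0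
    · rw [hC, hc, if_pos (by rw [h]; norm_num), if_pos h]; norm_num
    · rw [hC, hc, if_neg (by simp [div_eq_zero_iff, h]), if_neg h]
      field_simp
  have hca : c * a = Real.tanh (a/2) / 2 := by
    by_cases h : a = 0
    · simp [hc, h]
    · rw [hc, if_neg h]
      field_simp
  have hexp : C * ((b/2)^2 - (a/2)^2)
      = Real.tanh (a/2)/2 * (b-a) + 1/2 * (c*(b-a)^2) := by
    rw [hCc, ← hca]; ring
  nlinarith [hkey, hexp]

open Matrix

/-- The quadratic-upper-bound second-order-information matrix for the logistic loss:
`H_qu(v,(x,y)) = (tanh(⟨x,v⟩/2)/(2⟨x,v⟩)) xxᵀ` when `⟨x,v⟩ ≠ 0`, and `(1/4) xxᵀ`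
when `⟨x,v⟩ = 0`. -/
noncomputable def Hqu {d : ℕ} (v x : Fin d → ℝ) : Matrix (Fin d) (Fin d) ℝ :=
  (if (x ⬝ᵥ v : ℝ) = 0 then (1 : ℝ) / 4
    else Real.tanh ((x ⬝ᵥ v) / 2) / (2 * (x ⬝ᵥ v))) • Matrix.vecMulVec x x

/-- Global quadratic upper bound on the logistic loss
`f_LL(w,(x,y)) = log(1 + exp(−y⟨w,x⟩))`:
for all `v, x, w ∈ ℝ^d` and `y ∈ {−1,+1}`,
`f_LL(w) ≤ f_LL(v) + ⟨∇f_LL(v), w − v⟩ + (1/2)⟨H_qu(v)(w − v), w − v⟩`,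
where `∇f_LL(v,(x,y)) = −yx/(1 + exp(y⟨v,x⟩))`. -/
theorem logistic_quadratic_upper_bound {d : ℕ} (v x w : Fin d → ℝ) (y : ℝ)
    (hy : y = 1 ∨ y = -1) :
    Real.log (1 + Real.exp (-(y * (w ⬝ᵥ x)))) ≤
      Real.log (1 + Real.exp (-(y * (v ⬝ᵥ x))))
        + ((-y / (1 + Real.exp (y * (v ⬝ᵥ x)))) • x) ⬝ᵥ (w - v)
        + (1 / 2) * ((w - v) ⬝ᵥ (Hqu v x).mulVec (w - v)) := by
  have hxv : x ⬝ᵥ v = v ⬝ᵥ x := dotProduct_comm x v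
  set a := v ⬝ᵥ x with ha
  set b := w ⬝ᵥ x with hb
  have hz : x ⬝ᵥ (w - v) = b - a := by
    rw [dotProduct_sub, dotProduct_comm x w, dotProduct_comm x v]
  have hlin : ((-y / (1 + Real.exp (y * a))) • x) ⬝ᵥ (w - v)
      = (-y / (1 + Real.exp (y * a))) * (b - a) := by
    rw [smul_dotProduct, hz, smul_eq_mul]
  have hmv : (Matrix.vecMulVec x x).mulVec (w - v) = (x ⬝ᵥ (w - v)) • x := by
    ext i
    simp [Matrix.mulVec, Matrix.vecMulVec_apply, dotProduct, Finset.mul_sum,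
      mul_comm, mul_assoc, mul_left_comm]
  have hquad : (w - v) ⬝ᵥ (Hqu v x).mulVec (w - v)
      = (if a = 0 then (1:ℝ)/4 else Real.tanh (a/2) / (2*a)) * (b - a)^2 := by
    rw [Hqu, hxv, Matrix.smul_mulVec, hmv, hz]
    rw [dotProduct_smul, dotProduct_smul, smul_eq_mul, smul_eq_mul,
      dotProduct_comm (w - v) x, hz]
    ring
  rw [hlin, hquad]
  exact scalar_main y a b hy
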